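/- In a closed symmetric monoidal category with pushouts, if a morphism h₁ is a cobase change (pushout) of a morphism h₂, then for any morphism h₀ the pushout product h₁ □ h₀ is a cobase change of h₂ □ h₀. -/
import Mathlib

open CategoryTheory CategoryTheory.Limits CategoryTheory.MonoidalCategory

noncomputable section

variable {C : Type*} [Category C] [MonoidalCategory C] [SymmetricCategory C]
  [MonoidalClosed C] [HasPushouts C]

/-- The pushout product `f □ g` of `f : A ⟶ B` and `g : X ⟶ Y`:
the induced map `(A ⊗ Y) ⊔_{A ⊗ X} (B ⊗ X) ⟶ B ⊗ Y`. -/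
def pushoutProduct {A B X Y : C} (f : A ⟶ B) (g : X ⟶ Y) :
    pushout (f ▷ X) (A ◁ g) ⟶ B ⊗ Y :=
  pushout.desc (B ◁ g) (f ▷ Y) (whisker_exchange f g).symm

/-- `h₁` is a cobase change of `h₂` if it is the parallel side of a pushout
square with `h₂`. -/
def IsCobaseChange {P Q S T : C} (h₂ : P ⟶ Q) (h₁ : S ⟶ T) : Prop :=
  ∃ (u : P ⟶ S) (v : Q ⟶ T), IsPushout u h₂ h₁ v

/-- Tensoring on the right preserves colimits in a closed symmetric monoidal
category. -/
lemma tensorRight_preservesColimits (W : C) :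
    PreservesColimitsOfSize.{0, 0} (tensorRight W) := by
  haveI : PreservesColimitsOfSize.{0, 0} (tensorLeft W) :=
    (ihom.adjunction W).leftAdjoint_preservesColimits
  exact preservesColimits_of_natIso
    (show tensorLeft W ≅ tensorRight W from
      NatIso.ofComponents (fun A => β_ W A) (fun f => by simp))

/-- **Cobase changes are preserved by pushout products.**
In a closed symmetric monoidal category with pushouts, if `h₁` is a cobase
change of `h₂`, then for any morphism `h₀` the pushout product `h₁ □ h₀` is a
cobase change of `h₂ □ h₀`. -/
theorem isCobaseChange_pushoutProduct {P Q S T X Y : C}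
    (h₂ : P ⟶ Q) (h₁ : S ⟶ T) (h₀ : X ⟶ Y)
    (h : IsCobaseChange h₂ h₁) :
    IsCobaseChange (pushoutProduct h₂ h₀) (pushoutProduct h₁ h₀) := by
  obtain ⟨u, v, sq⟩ := h
  haveI : PreservesColimitsOfSize.{0, 0} (tensorRight X) :=
    tensorRight_preservesColimits X
  haveI : PreservesColimitsOfSize.{0, 0} (tensorRight Y) :=
    tensorRight_preservesColimits Y
  -- The original square tensored with X (flipped) and with Y
  have sqX : IsPushout (h₂ ▷ X) (u ▷ X) (v ▷ X) (h₁ ▷ X) := by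
    simpa using sq.flip.map (tensorRight X)
  have sqY : IsPushout (u ▷ Y) (h₂ ▷ Y) (h₁ ▷ Y) (v ▷ Y) := by
    simpa using sq.map (tensorRight Y)
  -- the comparison morphism between the pushout-product domains
  refine ⟨pushout.desc (v ▷ X ≫ pushout.inl _ _) (u ▷ Y ≫ pushout.inr _ _) ?_, v ▷ Y, ?_⟩
  · rw [← Category.assoc, ← comp_whiskerRight, ← sq.w, comp_whiskerRight, Category.assoc,
      pushout.condition, ← Category.assoc, ← whisker_exchange, Category.assoc]
  set u' : pushout (h₂ ▷ X) (P ◁ h₀) ⟶ pushout (h₁ ▷ X) (S ◁ h₀) :=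
    pushout.desc (v ▷ X ≫ pushout.inl _ _) (u ▷ Y ≫ pushout.inr _ _) _ with hu'
  -- the pasted big square
  have big : IsPushout (h₂ ▷ X) (u ▷ X ≫ S ◁ h₀) (v ▷ X ≫ pushout.inl _ _)
      (pushout.inr (h₁ ▷ X) (S ◁ h₀)) :=
    sqX.paste_vert (IsPushout.of_hasPushout (h₁ ▷ X) (S ◁ h₀))
  have big' : IsPushout (h₂ ▷ X) (P ◁ h₀ ≫ u ▷ Y)
      (pushout.inl (h₂ ▷ X) (P ◁ h₀) ≫ u') (pushout.inr (h₁ ▷ X) (S ◁ h₀)) := by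
    rw [whisker_exchange, hu', pushout.inl_desc]
    exact big
  -- cancel the top square defining the source pushout product
  have sqInr : IsPushout (pushout.inr (h₂ ▷ X) (P ◁ h₀)) (u ▷ Y) u'
      (pushout.inr (h₁ ▷ X) (S ◁ h₀)) :=
    big'.of_top (by rw [hu', pushout.inr_desc]) (IsPushout.of_hasPushout _ _)
  -- the big square tensored with Y, written via the pushout products
  have sqY' : IsPushout (u ▷ Y)
      (pushout.inr (h₂ ▷ X) (P ◁ h₀) ≫ pushoutProduct h₂ h₀)
      (pushout.inr (h₁ ▷ X) (S ◁ h₀) ≫ pushoutProduct h₁ h₀) (v ▷ Y) := by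
    rw [pushoutProduct, pushoutProduct, pushout.inr_desc, pushout.inr_desc]
    exact sqY
  refine sqY'.of_top ?_ sqInr.flip
  -- commutativity of the bottom square
  apply pushout.hom_ext
  · rw [hu']
    simp only [pushoutProduct, Category.assoc, pushout.inl_desc, pushout.inl_desc_assoc]
    exact (whisker_exchange v h₀).symm
  · rw [hu']
    simp only [pushoutProduct, Category.assoc, pushout.inr_desc, pushout.inr_desc_assoc]
    rw [← comp_whiskerRight, ← comp_whiskerRight, sq.w]

end
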